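/- Let M ⊂ ℂ^N×ℂ^N be a formal generic manifold of codimension d whose ideal, in coordinates Z = (z,w) ∈ ℂ^n×ℂ^d and ζ = (χ,τ), is generated by w_j − Q_j(z,χ,τ), j = 1,…,d, and let γ be the Segre variety mapping γ(ζ,t) = (t, Q(t,χ,τ)). Then for any integer j ≥ 2, the iterated Segre mappings satisfy v^{j+1}(t^1,…,t^{j−1},t^j,t^{j+1})|_{t^{j+1} = t^{j−1}} = v^{j−1}(t^1,…,t^{j−1}). -/

import Mathlib

noncomputable section

namespace Segre

open MvPowerSeries

/-- Formal power series with complex coefficients. -/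
abbrev PS (σ : Type*) := MvPowerSeries σ ℂ

/-- Build a power series from its coefficient function. -/
def ofFun {σ : Type*} (g : (σ →₀ ℕ) → ℂ) : PS σ := g

/-- Coefficientwise complex conjugation of a formal power series. -/
def conjPS {σ : Type*} (f : PS σ) : PS σ := MvPowerSeries.map (σ := σ) (starRingEnd ℂ) f

/-- Formal partial derivative of a formal power series. -/
def pd {σ : Type*} [DecidableEq σ] (j : σ) (f : PS σ) : PS σ :=
  ofFun fun m => ((m j : ℂ) + 1) * MvPowerSeries.coeff (R := ℂ) (m + Finsupp.single j 1) f

/-- Reindexing of variables along an equivalence. -/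
def reindexPS {σ τ : Type*} (e : σ ≃ τ) (f : PS σ) : PS τ :=
  ofFun fun m => MvPowerSeries.coeff (R := ℂ) (Finsupp.equivMapDomain e.symm m) f

/-- Formal composition (substitution) `f ∘ F` of a formal power series
`f` in the variables `τ` with a family `F` of power series without constant
term.  (For families with nonvanishing constant term the value is junk.) -/
def cmp {τ σ : Type*} [Fintype τ] [DecidableEq τ] (f : PS τ) (F : τ → PS σ) : PS σ :=
  ofFun fun m => MvPowerSeries.coeff (R := ℂ) m
    (∑ α ∈ Finset.Iic (Finsupp.equivFunOnFinite.symm fun _ => m.sum fun _ k => k),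
      MvPowerSeries.coeff (R := ℂ) α f • ∏ i, F i ^ α i)

/-- Renaming of variables along an (injective) map. -/
def injPS {σ τ : Type*} [Fintype σ] [DecidableEq σ] (ι : σ → τ) (f : PS σ) : PS τ :=
  cmp f fun s => MvPowerSeries.X (ι s)

/-- The "generic rank" of a matrix over a commutative ring: the largest size of a
nonvanishing minor. -/
def matGenRank {α β R : Type*} [Fintype α] [Fintype β] [CommRing R] (M : Matrix α β R) : ℕ :=
  sSup {s | ∃ (r : Fin s ↪ α) (c : Fin s ↪ β), (M.submatrix r c).det ≠ 0}

/-- The Jacobian matrix of a formal mapping. -/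
def jac {σ ι : Type*} [DecidableEq σ] (F : ι → PS σ) : Matrix ι σ (PS σ) :=
  Matrix.of fun i j => pd j (F i)

/-- The rank `Rk F` of a formal mapping: the largest size of a nonvanishing minor of the
Jacobian matrix, i.e. the rank of the Jacobian matrix over the fraction field. -/
def rk {σ ι : Type*} [Fintype σ] [DecidableEq σ] [Fintype ι] (F : ι → PS σ) : ℕ :=
  matGenRank (jac F)

/-- The rank at `0` of the Jacobian matrix of a formal mapping. -/
def rk0 {σ ι : Type*} [Fintype σ] [DecidableEq σ] [Fintype ι] (F : ι → PS σ) : ℕ :=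
  Matrix.rank ((jac F).map (MvPowerSeries.constantCoeff (σ := σ) (R := ℂ)))

/-- A formal mapping: each component has vanishing constant term. -/
def IsFormalMap {σ ι : Type*} (F : ι → PS σ) : Prop :=
  ∀ i, MvPowerSeries.constantCoeff (σ := σ) (R := ℂ) (F i) = 0

/-- The differential at `0` of a formal power series. -/
def diff0 {σ : Type*} [DecidableEq σ] (f : PS σ) : σ → ℂ :=
  fun j => MvPowerSeries.constantCoeff (σ := σ) (R := ℂ) (pd j f)

/-- `I` is the manifold ideal with generators `f`: the generators have no constant
term, generate `I`, and have linearly independent differentials at `0`. -/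
def IsMfldIdealWith {σ ι : Type*} [Fintype σ] [DecidableEq σ]
    (I : Ideal (PS σ)) (f : ι → PS σ) : Prop :=
  (∀ i, MvPowerSeries.constantCoeff (σ := σ) (R := ℂ) (f i) = 0) ∧
  I = Ideal.span (Set.range f) ∧
  LinearIndependent ℂ fun i => diff0 (f i)

/-- `I` is a manifold ideal of codimension `d`. -/
def IsMfldIdeal {σ : Type*} [Fintype σ] [DecidableEq σ] (I : Ideal (PS σ)) (d : ℕ) : Prop :=
  ∃ f : Fin d → PS σ, IsMfldIdealWith I f

/-- A formal vector field, given by its coefficients. -/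
abbrev VF (σ : Type*) := σ → PS σ

/-- The action of a formal vector field (as a derivation) on a power series. -/
def vfApply {σ : Type*} [Fintype σ] [DecidableEq σ] (X : VF σ) (f : PS σ) : PS σ :=
  ∑ j, X j * pd j f

/-- The Lie bracket (commutator) of two formal vector fields. -/
def vfBracket {σ : Type*} [Fintype σ] [DecidableEq σ] (X Y : VF σ) : VF σ :=
  fun j => vfApply X (Y j) - vfApply Y (X j)

/-- Evaluation of a formal vector field at the origin. -/
def vfEval0 {σ : Type*} (X : VF σ) : σ → ℂ :=
  fun j => MvPowerSeries.constantCoeff (σ := σ) (R := ℂ) (X j)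

/-- A formal vector field is tangent to (the formal manifold defined by) an ideal if it
maps the ideal into itself. -/
def Tangent {σ : Type*} [Fintype σ] [DecidableEq σ] (X : VF σ) (I : Ideal (PS σ)) : Prop :=
  ∀ f ∈ I, vfApply X f ∈ I

/-- The Lie algebra (of formal vector fields) generated by a set `S`. -/
inductive lieGen {σ : Type*} [Fintype σ] [DecidableEq σ] (S : Set (VF σ)) : VF σ → Prop
  | base {X} : X ∈ S → lieGen S X
  | add {X Y} : lieGen S X → lieGen S Y → lieGen S (X + Y)
  | smul (c : ℂ) {X} : lieGen S X → lieGen S (fun j => (MvPowerSeries.C (σ := σ) (R := ℂ) c) * X j)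
  | bracket {X Y} : lieGen S X → lieGen S Y → lieGen S (vfBracket X Y)

/-- A set of formal vector fields which is a Lie algebra and a `ℂ[[x]]`-module. -/
structure IsLieMod {σ : Type*} [Fintype σ] [DecidableEq σ] (g : Set (VF σ)) : Prop where
  add_mem : ∀ {X Y : VF σ}, X ∈ g → Y ∈ g → X + Y ∈ g
  smul_mem : ∀ (a : PS σ) {X : VF σ}, X ∈ g → (fun j => a * X j) ∈ g
  bracket_mem : ∀ {X Y : VF σ}, X ∈ g → Y ∈ g → vfBracket X Y ∈ g

/-- The involution `σ(f)(Z,ζ) = conj f(ζ,Z)` on power series in `(Z,ζ)`. -/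
def realOp {σZ : Type*} (f : PS (σZ ⊕ σZ)) : PS (σZ ⊕ σZ) :=
  conjPS (reindexPS (Equiv.sumComm σZ σZ) f)

/-- The matrix `∂ρ/∂Z` of the derivatives of `ρ` in the first (holomorphic) block of
variables. -/
def zJac {σZ ι : Type*} [DecidableEq σZ] (ρ : ι → PS (σZ ⊕ σZ)) : Matrix ι σZ (PS (σZ ⊕ σZ)) :=
  Matrix.of fun l j => pd (Sum.inl j) (ρ l)

/-- `I` is the ideal of a formal generic manifold of codimension `d`, with given
generators `ρ`: `I` is a real manifold ideal and `∂ρ/∂Z(0)` has rank `d`. -/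
def IsGenericMfld {σZ : Type*} [Fintype σZ] [DecidableEq σZ] {d : ℕ}
    (I : Ideal (PS (σZ ⊕ σZ))) (ρ : Fin d → PS (σZ ⊕ σZ)) : Prop :=
  IsMfldIdealWith I ρ ∧ (∀ f ∈ I, realOp f ∈ I) ∧
  Matrix.rank ((zJac ρ).map (MvPowerSeries.constantCoeff (R := ℂ))) = d

/-- The set of formal `(1,0)` and `(0,1)` vector fields tangent to (the manifold defined
by) `I`. -/
def holFields {σZ : Type*} [Fintype σZ] [DecidableEq σZ] (I : Ideal (PS (σZ ⊕ σZ))) :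
    Set (VF (σZ ⊕ σZ)) :=
  {X | ((∀ j, X (Sum.inr j) = 0) ∨ (∀ j, X (Sum.inl j) = 0)) ∧ Tangent X I}

/-- `dim_ℂ g_M(0)`, where `g_M` is the Lie algebra generated by the formal `(1,0)` and
`(0,1)` vector fields tangent to `M`. -/
def gMDim {σZ : Type*} [Fintype σZ] [DecidableEq σZ] (I : Ideal (PS (σZ ⊕ σZ))) : ℕ :=
  Module.finrank ℂ (Submodule.span ℂ (vfEval0 '' {X | lieGen (holFields I) X}))

/-- `γ(ζ,t)` is a Segre variety mapping for the (formal generic manifold with) defining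
series `ρ`:  `γ` has no constant term, `ρ(γ(ζ,t),ζ) = 0`, and `∂γ/∂t(0)` has rank `n`. -/
def IsSegreMap {n d : ℕ} (ρ : Fin d → PS (Fin (n + d) ⊕ Fin (n + d)))
    (γ : Fin (n + d) → PS (Fin (n + d) ⊕ Fin n)) : Prop :=
  IsFormalMap γ ∧
  (∀ l, cmp (ρ l) (Sum.elim γ fun j => MvPowerSeries.X (Sum.inl j)) = 0) ∧
  Matrix.rank
    (Matrix.of fun (i : Fin (n + d)) (j : Fin n) =>
      MvPowerSeries.constantCoeff (R := ℂ) (pd (Sum.inr j) (γ i))) = n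

/-- The iterated Segre mappings: `iterSegre γ j` is `v^{j+1}`, a formal mapping from
`ℂ^{(j+1)n}` (with variables indexed by `Fin (j+1) × Fin n`) to `ℂ^N`. -/
def iterSegre {n d : ℕ} (γ : Fin (n + d) → PS (Fin (n + d) ⊕ Fin n)) :
    (j : ℕ) → Fin (n + d) → PS (Fin (j + 1) × Fin n)
  | 0 => fun c =>
      cmp (γ c) (Sum.elim (fun _ => 0) fun i => MvPowerSeries.X ((0 : Fin 1), i))
  | m + 1 => fun c =>
      cmp (γ c)
        (Sum.elim
          (fun z => conjPS (injPS (fun p : Fin (m + 1) × Fin n => (p.1.castSucc, p.2))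
            (iterSegre γ m z)))
          (fun i => MvPowerSeries.X (Fin.last (m + 1), i)))


/-- The iterated Segre mappings associated with the graphed defining equations
`w = Q(z,χ,τ)` and the Segre variety mapping `γ(ζ,t) = (t, Q(t,χ,τ))`:
`segQ Q j` is `v^{j+1}`. -/
def segQ {n d : ℕ} (Q : Fin d → PS (Fin n ⊕ (Fin n ⊕ Fin d))) :
    (j : ℕ) → Fin n ⊕ Fin d → PS (Fin (j + 1) × Fin n)
  | 0 => Sum.elim (fun i => MvPowerSeries.X ((0 : Fin 1), i))
      (fun l => cmp (Q l)
        (Sum.elim (fun i => (MvPowerSeries.X ((0 : Fin 1), i) : PS (Fin 1 × Fin n)))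
          fun _ => 0))
  | m + 1 => Sum.elim (fun i => MvPowerSeries.X (Fin.last (m + 1), i))
      (fun l => cmp (Q l)
        (Sum.elim
          (fun i => (MvPowerSeries.X (Fin.last (m + 1), i) : PS (Fin (m + 2) × Fin n)))
          fun zc => conjPS (injPS (fun p : Fin (m + 1) × Fin n => (p.1.castSucc, p.2))
            (segQ Q m zc))))

section Infra

open Finset

variable {σ τ υ : Type*}

/-- total degree of a multi-index -/
def deg (m : σ →₀ ℕ) : ℕ := m.sum fun _ k => k

/-- the box bound appearing in `cmp` -/
def box (σ : Type*) [Fintype σ] (K : ℕ) : σ →₀ ℕ :=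
  Finsupp.equivFunOnFinite.symm fun _ => K

lemma box_apply [Fintype σ] (K : ℕ) (i : σ) : box σ K i = K := rfl

lemma deg_eq_sum [Fintype σ] (m : σ →₀ ℕ) : deg m = ∑ i, m i :=
  Finsupp.sum_fintype _ _ (fun _ => rfl)

lemma apply_le_deg [Fintype σ] (m : σ →₀ ℕ) (i : σ) : m i ≤ deg m := by
  rw [deg_eq_sum]
  exact Finset.single_le_sum (fun _ _ => Nat.zero_le _) (Finset.mem_univ i)

lemma deg_mono [Fintype σ] {p m : σ →₀ ℕ} (h : p ≤ m) : deg p ≤ deg m := by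
  rw [deg_eq_sum, deg_eq_sum]
  exact Finset.sum_le_sum fun i _ => (Finsupp.le_def.mp h) i

lemma le_box_iff [Fintype σ] {α : σ →₀ ℕ} {K : ℕ} : α ≤ box σ K ↔ ∀ i, α i ≤ K := by
  constructor
  · exact fun h i => Finsupp.le_def.mp h i
  · exact fun h => Finsupp.le_def.mpr fun i => h i

lemma deg_add (p q : σ →₀ ℕ) : deg (p + q) = deg p + deg q :=
  Finsupp.sum_add_index' (fun _ => rfl) (fun _ _ _ => rfl)

lemma one_le_deg {p : σ →₀ ℕ} (hp : p ≠ 0) : 1 ≤ deg p := by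
  obtain ⟨a, ha⟩ : ∃ a, p a ≠ 0 := by
    by_contra h; push_neg at h; exact hp (Finsupp.ext h)
  calc 1 ≤ p a := Nat.one_le_iff_ne_zero.2 ha
    _ ≤ deg p := Finset.single_le_sum (f := fun i => p i) (fun _ _ => Nat.zero_le _)
        (Finsupp.mem_support_iff.2 ha)

lemma finsupp_le_zero {α : σ →₀ ℕ} (h : α ≤ 0) : α = 0 :=
  Finsupp.ext fun i => Nat.le_zero.mp (Finsupp.le_def.mp h i)

lemma mem_Iic_box_self [Fintype σ] [DecidableEq σ] (m : σ →₀ ℕ) : m ∈ Finset.Iic (box σ (deg m)) :=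
  Finset.mem_Iic.2 (le_box_iff.mpr fun i => apply_le_deg m i)

/-- The basic coefficient formula for `cmp`. -/
lemma coeff_cmp [Fintype τ] [DecidableEq τ] (f : PS τ) (F : τ → PS σ) (m : σ →₀ ℕ) :
    MvPowerSeries.coeff (R := ℂ) m (cmp f F) =
      ∑ α ∈ Finset.Iic (box τ (deg m)),
        MvPowerSeries.coeff (R := ℂ) α f * MvPowerSeries.coeff (R := ℂ) m (∏ i, F i ^ α i) := by
  have : MvPowerSeries.coeff (R := ℂ) m (cmp f F) =
      MvPowerSeries.coeff (R := ℂ) m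
        (∑ α ∈ Finset.Iic (box τ (deg m)),
          MvPowerSeries.coeff (R := ℂ) α f • ∏ i, F i ^ α i) := rfl
  rw [this, map_sum]
  exact Finset.sum_congr rfl fun α _ => by rw [LinearMap.map_smul, smul_eq_mul]

/-- Vanishing of low coefficients of high powers of series without constant term. -/
lemma coeff_prod_pow_eq_zero [DecidableEq σ] {ι : Type*} [DecidableEq ι] (k : ℕ) :
    ∀ (s : Finset ι) (g : ι → PS σ) (e : ι → ℕ),
    (∀ i ∈ s, MvPowerSeries.constantCoeff (σ := σ) (R := ℂ) (g i) = 0) → k = ∑ i ∈ s, e i →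
    ∀ m : σ →₀ ℕ, deg m < k → MvPowerSeries.coeff (R := ℂ) m (∏ i ∈ s, g i ^ e i) = 0 := by
  induction k with
  | zero => intro _ _ _ _ _ m hm; omega
  | succ k ih =>
    intro s g e hg hk m hm
    have hex : ∃ i ∈ s, e i ≠ 0 := by
      by_contra h; push_neg at h
      rw [Finset.sum_eq_zero h] at hk; omega
    obtain ⟨i, hi, hei⟩ := hex
    set e' : ι → ℕ := fun j => if j = i then e i - 1 else e j with he'
    have hsum' : ∑ j ∈ s, e' j = k := by
      have h1 : ∑ j ∈ s, e' j = e' i + ∑ j ∈ s.erase i, e' j :=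
        (Finset.add_sum_erase s e' hi).symm
      have h2 : ∑ j ∈ s, e j = e i + ∑ j ∈ s.erase i, e j :=
        (Finset.add_sum_erase s e hi).symm
      have h3 : ∑ j ∈ s.erase i, e' j = ∑ j ∈ s.erase i, e j :=
        Finset.sum_congr rfl fun j hj => by
          simp [he', Finset.ne_of_mem_erase hj]
      have h4 : e' i = e i - 1 := by simp [he']
      rw [h1, h3, h4]
      omega
    have hprod : ∏ j ∈ s, g j ^ e j = g i * ∏ j ∈ s, g j ^ e' j := by
      rw [← Finset.mul_prod_erase s _ hi, ← Finset.mul_prod_erase s (fun j => g j ^ e' j) hi]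
      have h1 : ∏ j ∈ s.erase i, g j ^ e' j = ∏ j ∈ s.erase i, g j ^ e j :=
        Finset.prod_congr rfl fun j hj => by
          simp [he', Finset.ne_of_mem_erase hj]
      rw [h1, ← mul_assoc]
      congr 1
      have : e' i = e i - 1 := by simp [he']
      rw [this, ← pow_succ']
      congr 1; omega
    rw [hprod, MvPowerSeries.coeff_mul]
    apply Finset.sum_eq_zero
    rintro ⟨p, q⟩ hpq
    rw [Finset.HasAntidiagonal.mem_antidiagonal] at hpq
    by_cases hp : p = 0
    · subst hp
      rw [MvPowerSeries.coeff_zero_eq_constantCoeff, hg i hi, zero_mul]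
    · have hdq : deg q < k := by
        have h1 : deg p + deg q = deg m := by rw [← deg_add, hpq]
        have h2 := one_le_deg hp
        omega
      rw [ih s g e' hg hsum'.symm q hdq, mul_zero]

end Infra
section Infra2

open Finset

variable {σ τ υ : Type*} [Fintype τ] [DecidableEq τ] [DecidableEq σ]

lemma coeff_prod_vanish [Fintype σ] (F : τ → PS σ)
    (hF : ∀ i, MvPowerSeries.constantCoeff (σ := σ) (R := ℂ) (F i) = 0) {α : τ →₀ ℕ} {m : σ →₀ ℕ}
    (h : ¬ α ≤ box τ (deg m)) :
    MvPowerSeries.coeff (R := ℂ) m (∏ i, F i ^ α i) = 0 := by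
  obtain ⟨i, hi⟩ : ∃ i, ¬ α i ≤ deg m := by
    by_contra hc; push_neg at hc
    exact h (le_box_iff.mpr fun i => hc i)
  refine coeff_prod_pow_eq_zero (∑ i, α i) Finset.univ F (fun i => α i)
    (fun i _ => hF i) rfl m ?_
  have : α i ≤ ∑ i, α i :=
    Finset.single_le_sum (fun _ _ => Nat.zero_le _) (Finset.mem_univ i)
  omega

lemma coeff_cmp_sup [Fintype σ] (f : PS τ) (F : τ → PS σ)
    (hF : ∀ i, MvPowerSeries.constantCoeff (σ := σ) (R := ℂ) (F i) = 0) {m : σ →₀ ℕ}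
    {A : Finset (τ →₀ ℕ)} (hA : Finset.Iic (box τ (deg m)) ⊆ A) :
    MvPowerSeries.coeff (R := ℂ) m (cmp f F) =
      ∑ α ∈ A, MvPowerSeries.coeff (R := ℂ) α f * MvPowerSeries.coeff (R := ℂ) m (∏ i, F i ^ α i) := by
  rw [coeff_cmp]
  refine Finset.sum_subset hA fun α _ hα => ?_
  rw [coeff_prod_vanish F hF (by simpa using hα), mul_zero]

lemma cmp_zero (F : τ → PS σ) : cmp (0 : PS τ) F = 0 := by
  apply MvPowerSeries.ext; intro m
  rw [coeff_cmp]
  simp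

lemma cmp_add (f g : PS τ) (F : τ → PS σ) : cmp (f + g) F = cmp f F + cmp g F := by
  apply MvPowerSeries.ext; intro m
  rw [map_add, coeff_cmp, coeff_cmp, coeff_cmp, ← Finset.sum_add_distrib]
  exact Finset.sum_congr rfl fun α _ => by rw [map_add, add_mul]

lemma cmp_one (F : τ → PS σ) : cmp (1 : PS τ) F = 1 := by
  apply MvPowerSeries.ext; intro m
  rw [coeff_cmp, Finset.sum_eq_single_of_mem 0 (Finset.mem_Iic.2 zero_le)]
  · simp [MvPowerSeries.coeff_one]
  · intro α _ hα
    rw [MvPowerSeries.coeff_one, if_neg hα, zero_mul]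

lemma constantCoeff_cmp (f : PS τ) (F : τ → PS σ) :
    MvPowerSeries.constantCoeff (σ := σ) (R := ℂ) (cmp f F) = MvPowerSeries.constantCoeff (σ := τ) (R := ℂ) f := by
  rw [← MvPowerSeries.coeff_zero_eq_constantCoeff, ← MvPowerSeries.coeff_zero_eq_constantCoeff,
    coeff_cmp]
  have hb : box τ (deg (0 : σ →₀ ℕ)) = 0 := by
    apply Finsupp.ext; intro i
    rw [box_apply]
    simp [deg]
  rw [hb, Finset.sum_eq_single_of_mem 0 (Finset.mem_Iic.2 (le_refl _))]
  · simp
  · intro α hα hne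
    exact absurd (finsupp_le_zero (Finset.mem_Iic.1 hα)) hne

lemma cmp_mul [Fintype σ] (f g : PS τ) (F : τ → PS σ)
    (hF : ∀ i, MvPowerSeries.constantCoeff (σ := σ) (R := ℂ) (F i) = 0) :
    cmp (f * g) F = cmp f F * cmp g F := by
  classical
  apply MvPowerSeries.ext; intro m
  set D := box τ (deg m) with hD
  set H : (τ →₀ ℕ) × (τ →₀ ℕ) → ℂ := fun bg =>
    MvPowerSeries.coeff (R := ℂ) bg.1 f * MvPowerSeries.coeff (R := ℂ) bg.2 g *
      MvPowerSeries.coeff (R := ℂ) m (∏ i, F i ^ ((bg.1 + bg.2) i)) with hH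
  have hvan : ∀ bg : (τ →₀ ℕ) × (τ →₀ ℕ), ¬ bg.1 + bg.2 ≤ D → H bg = 0 := by
    intro bg h
    rw [hH]
    simp only
    rw [coeff_prod_vanish F hF h, mul_zero]
  have lhs : MvPowerSeries.coeff (R := ℂ) m (cmp (f * g) F) =
      ∑ bg ∈ (Finset.Iic D ×ˢ Finset.Iic D).filter (fun bg => bg.1 + bg.2 ≤ D), H bg := by
    rw [coeff_cmp]
    have step1 : ∀ α ∈ Finset.Iic D,
        MvPowerSeries.coeff (R := ℂ) α (f * g) * MvPowerSeries.coeff (R := ℂ) m (∏ i, F i ^ α i) =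
        ∑ bg ∈ Finset.HasAntidiagonal.antidiagonal α, H bg := by
      intro α hα
      rw [MvPowerSeries.coeff_mul, Finset.sum_mul]
      refine Finset.sum_congr rfl fun bg hbg => ?_
      rw [hH]
      simp only
      rw [Finset.HasAntidiagonal.mem_antidiagonal.1 hbg]
    rw [Finset.sum_congr rfl step1]
    rw [← Finset.sum_biUnion]
    · apply Finset.sum_congr _ (fun _ _ => rfl)
      apply Finset.ext
      intro bg
      simp only [Finset.mem_biUnion, Finset.HasAntidiagonal.mem_antidiagonal, Finset.mem_filter,
        Finset.mem_product, Finset.mem_Iic]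
      constructor
      · rintro ⟨α, hα, rfl⟩
        exact ⟨⟨le_trans le_self_add hα, le_trans le_add_self hα⟩, hα⟩
      · rintro ⟨⟨h1, h2⟩, h3⟩
        exact ⟨bg.1 + bg.2, h3, rfl⟩
    · intro α _ α' _ hne
      apply Finset.disjoint_left.2
      intro bg h1 h2
      exact hne (by rw [← Finset.HasAntidiagonal.mem_antidiagonal.1 h1, ← Finset.HasAntidiagonal.mem_antidiagonal.1 h2])
  have rhs : MvPowerSeries.coeff (R := ℂ) m (cmp f F * cmp g F) =
      ∑ bg ∈ Finset.Iic D ×ˢ Finset.Iic D, H bg := by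
    rw [MvPowerSeries.coeff_mul]
    have step1 : ∀ pq ∈ Finset.HasAntidiagonal.antidiagonal m,
        MvPowerSeries.coeff (R := ℂ) pq.1 (cmp f F) * MvPowerSeries.coeff (R := ℂ) pq.2 (cmp g F) =
        ∑ bg ∈ Finset.Iic D ×ˢ Finset.Iic D,
          (MvPowerSeries.coeff (R := ℂ) bg.1 f * MvPowerSeries.coeff (R := ℂ) pq.1 (∏ i, F i ^ bg.1 i)) *
          (MvPowerSeries.coeff (R := ℂ) bg.2 g * MvPowerSeries.coeff (R := ℂ) pq.2 (∏ i, F i ^ bg.2 i)) := by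
      intro pq hpq
      have hm : pq.1 + pq.2 = m := Finset.HasAntidiagonal.mem_antidiagonal.1 hpq
      have hsub : ∀ p' : σ →₀ ℕ, p' ≤ m → Finset.Iic (box τ (deg p')) ⊆ Finset.Iic D := by
        intro p' hp'
        apply Finset.Iic_subset_Iic.2
        refine le_box_iff.2 fun i => ?_
        rw [box_apply]
        exact deg_mono hp'
      rw [coeff_cmp_sup f F hF (hsub pq.1 (hm ▸ le_self_add)),
        coeff_cmp_sup g F hF (hsub pq.2 (hm ▸ le_add_self)),
        Finset.sum_mul_sum, ← Finset.sum_product']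
    rw [Finset.sum_congr rfl step1, Finset.sum_comm]
    refine Finset.sum_congr rfl fun bg _ => ?_
    have collect : ∀ pq : (σ →₀ ℕ) × (σ →₀ ℕ),
        (MvPowerSeries.coeff (R := ℂ) bg.1 f * MvPowerSeries.coeff (R := ℂ) pq.1 (∏ i, F i ^ bg.1 i)) *
          (MvPowerSeries.coeff (R := ℂ) bg.2 g * MvPowerSeries.coeff (R := ℂ) pq.2 (∏ i, F i ^ bg.2 i)) =
        MvPowerSeries.coeff (R := ℂ) bg.1 f * MvPowerSeries.coeff (R := ℂ) bg.2 g *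
          (MvPowerSeries.coeff (R := ℂ) pq.1 (∏ i, F i ^ bg.1 i) *
            MvPowerSeries.coeff (R := ℂ) pq.2 (∏ i, F i ^ bg.2 i)) := fun pq => by ring
    rw [Finset.sum_congr rfl fun pq _ => collect pq, ← Finset.mul_sum,
      ← MvPowerSeries.coeff_mul, hH]
    simp only
    have hpr : (∏ i, F i ^ (bg.1 + bg.2) i) = (∏ i, F i ^ bg.1 i) * ∏ i, F i ^ bg.2 i := by
      rw [← Finset.prod_mul_distrib]
      exact Finset.prod_congr rfl fun i _ => by rw [Finsupp.add_apply, pow_add]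
    rw [hpr]
  rw [lhs, rhs]
  exact Finset.sum_subset (Finset.filter_subset _ _) fun bg hbg hnb =>
    hvan bg fun hle => hnb (Finset.mem_filter.2 ⟨hbg, hle⟩)

end Infra2
section Infra3

open Finset

variable {σ τ : Type*} [Fintype τ] [DecidableEq τ] [DecidableEq σ] [Fintype σ]

/-- `cmp · F` as a ring homomorphism, for admissible `F`. -/
def cmpHom (F : τ → PS σ) (hF : ∀ i, MvPowerSeries.constantCoeff (σ := σ) (R := ℂ) (F i) = 0) :
    PS τ →+* PS σ where
  toFun f := cmp f F
  map_one' := cmp_one F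
  map_mul' f g := cmp_mul f g F hF
  map_zero' := cmp_zero F
  map_add' f g := cmp_add f g F

lemma cmp_prod_pow {ι : Type*} (s : Finset ι) (G : ι → PS τ) (e : ι → ℕ)
    (F : τ → PS σ) (hF : ∀ i, MvPowerSeries.constantCoeff (σ := σ) (R := ℂ) (F i) = 0) :
    cmp (∏ t ∈ s, G t ^ e t) F = ∏ t ∈ s, (cmp (G t) F) ^ e t := by
  have h := map_prod (cmpHom F hF) (fun t => G t ^ e t) s
  simp only [map_pow] at h
  exact h

lemma cmp_assoc {υ : Type*} [Fintype υ] [DecidableEq υ]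
    (f : PS υ) (G : υ → PS τ) (F : τ → PS σ)
    (hG : ∀ t, MvPowerSeries.constantCoeff (σ := τ) (R := ℂ) (G t) = 0)
    (hF : ∀ i, MvPowerSeries.constantCoeff (σ := σ) (R := ℂ) (F i) = 0) :
    cmp (cmp f G) F = cmp f (fun t => cmp (G t) F) := by
  apply MvPowerSeries.ext; intro m
  set K := Fintype.card τ * deg m + deg m with hK
  have hbig : Finset.Iic (box υ (deg m)) ⊆ Finset.Iic (box υ K) := by
    apply Finset.Iic_subset_Iic.2
    refine le_box_iff.2 fun i => ?_
    rw [box_apply]; omega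
  have h1 : MvPowerSeries.coeff (R := ℂ) m (cmp (cmp f G) F) =
      ∑ α ∈ Finset.Iic (box τ (deg m)), ∑ β ∈ Finset.Iic (box υ K),
        MvPowerSeries.coeff (R := ℂ) β f * MvPowerSeries.coeff (R := ℂ) α (∏ t, G t ^ β t) *
          MvPowerSeries.coeff (R := ℂ) m (∏ i, F i ^ α i) := by
    rw [coeff_cmp]
    refine Finset.sum_congr rfl fun α hα => ?_
    have hsub : Finset.Iic (box υ (deg α)) ⊆ Finset.Iic (box υ K) := by
      apply Finset.Iic_subset_Iic.2
      refine le_box_iff.2 fun i => ?_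
      rw [box_apply]
      have hdega : deg α ≤ Fintype.card τ * deg m := by
        rw [deg_eq_sum]
        calc ∑ t, α t ≤ ∑ _t : τ, deg m :=
              Finset.sum_le_sum fun t _ => by
                exact le_box_iff.1 (Finset.mem_Iic.1 hα) t
          _ = Fintype.card τ * deg m := by
              rw [Finset.sum_const, smul_eq_mul, Finset.card_univ]
      omega
    rw [coeff_cmp_sup f G hG hsub, Finset.sum_mul]
  have h2 : MvPowerSeries.coeff (R := ℂ) m (cmp f (fun t => cmp (G t) F)) =
      ∑ β ∈ Finset.Iic (box υ K), ∑ α ∈ Finset.Iic (box τ (deg m)),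
        MvPowerSeries.coeff (R := ℂ) β f * MvPowerSeries.coeff (R := ℂ) α (∏ t, G t ^ β t) *
          MvPowerSeries.coeff (R := ℂ) m (∏ i, F i ^ α i) := by
    rw [coeff_cmp_sup f (fun t => cmp (G t) F)
      (fun t => by rw [constantCoeff_cmp]; exact hG t) hbig]
    refine Finset.sum_congr rfl fun β _ => ?_
    rw [← cmp_prod_pow Finset.univ G (fun t => β t) F hF, coeff_cmp, Finset.mul_sum]
    exact Finset.sum_congr rfl fun α _ => by ring
  rw [h1, h2, Finset.sum_comm]

lemma cmp_X (s : τ) (F : τ → PS σ) (hs : MvPowerSeries.constantCoeff (σ := σ) (R := ℂ) (F s) = 0) :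
    cmp (MvPowerSeries.X s : PS τ) F = F s := by
  apply MvPowerSeries.ext; intro m
  rw [coeff_cmp]
  have hprod : (∏ i, F i ^ (Finsupp.single s 1) i) = F s := by
    rw [Finset.prod_eq_single s (fun i _ hne => by
        rw [Finsupp.single_apply, if_neg (fun h => hne h.symm), pow_zero])
      (fun h => absurd (Finset.mem_univ s) h)]
    rw [Finsupp.single_apply, if_pos rfl, pow_one]
  by_cases hm : m = 0
  · subst hm
    rw [Finset.sum_eq_zero, MvPowerSeries.coeff_zero_eq_constantCoeff, hs]
    intro α hα
    have h0 : box τ (deg (0 : σ →₀ ℕ)) = 0 := by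
      apply Finsupp.ext; intro i; rw [box_apply]; simp [deg]
    rw [h0] at hα
    have hz : α = 0 := finsupp_le_zero (Finset.mem_Iic.1 hα)
    subst hz
    rw [MvPowerSeries.coeff_X, if_neg (fun h =>
      one_ne_zero (Finsupp.single_eq_zero.1 h.symm)), zero_mul]
  · rw [Finset.sum_eq_single_of_mem (Finsupp.single s 1) ?_ ?_]
    · rw [MvPowerSeries.coeff_X, if_pos rfl, one_mul, hprod]
    · refine Finset.mem_Iic.2 (le_box_iff.2 fun i => ?_)
      rw [Finsupp.single_apply]
      have h1 : 1 ≤ deg m := one_le_deg hm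
      split <;> omega
    · intro α _ hne
      rw [MvPowerSeries.coeff_X, if_neg hne, zero_mul]

lemma prod_X_pow (α : σ →₀ ℕ) :
    (∏ i, (MvPowerSeries.X i : PS σ) ^ α i) = MvPowerSeries.monomial α (1 : ℂ) := by
  have h2 : (∏ i, (MvPolynomial.X i : MvPolynomial σ ℂ) ^ α i) =
      ∏ i ∈ α.support, (MvPolynomial.X i : MvPolynomial σ ℂ) ^ α i := by
    symm
    apply Finset.prod_subset (Finset.subset_univ _)
    intro i _ hi
    rw [Finsupp.notMem_support_iff.1 hi, pow_zero]
  have h1 : (∏ i, (MvPolynomial.X i : MvPolynomial σ ℂ) ^ α i) =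
      MvPolynomial.monomial α 1 := h2.trans MvPolynomial.prod_X_pow_eq_monomial
  have h3 := congrArg (MvPolynomial.coeToMvPowerSeries.ringHom (R := ℂ) (σ := σ)) h1
  rw [map_prod] at h3
  simp only [map_pow, MvPolynomial.coeToMvPowerSeries.ringHom_apply,
    MvPolynomial.coe_X, MvPolynomial.coe_monomial] at h3
  exact h3

lemma cmp_id (f : PS σ) : cmp f (fun s => (MvPowerSeries.X s : PS σ)) = f := by
  apply MvPowerSeries.ext; intro m
  rw [coeff_cmp, Finset.sum_eq_single_of_mem m (mem_Iic_box_self m)]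
  · rw [prod_X_pow, MvPowerSeries.coeff_monomial_same, mul_one]
  · intro α _ hne
    rw [prod_X_pow, MvPowerSeries.coeff_monomial_ne (fun h => hne h.symm), mul_zero]

lemma coeff_conjPS (f : PS σ) (m : σ →₀ ℕ) :
    MvPowerSeries.coeff (R := ℂ) m (conjPS f) = starRingEnd ℂ (MvPowerSeries.coeff (R := ℂ) m f) :=
  MvPowerSeries.coeff_map _ _ _

lemma conjPS_conjPS (f : PS σ) : conjPS (conjPS f) = f := by
  apply MvPowerSeries.ext; intro m
  rw [coeff_conjPS, coeff_conjPS, Complex.conj_conj]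

lemma conjPS_X (s : σ) : conjPS (MvPowerSeries.X s : PS σ) = MvPowerSeries.X s := by
  apply MvPowerSeries.ext; intro m
  rw [coeff_conjPS, MvPowerSeries.coeff_X]
  split <;> simp

lemma constantCoeff_conjPS (f : PS σ)
    (h : MvPowerSeries.constantCoeff (σ := σ) (R := ℂ) f = 0) :
    MvPowerSeries.constantCoeff (σ := σ) (R := ℂ) (conjPS f) = 0 := by
  rw [← MvPowerSeries.coeff_zero_eq_constantCoeff, coeff_conjPS,
    MvPowerSeries.coeff_zero_eq_constantCoeff, h, map_zero]

lemma conjPS_cmp (f : PS τ) (F : τ → PS σ) :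
    conjPS (cmp f F) = cmp (conjPS f) (fun t => conjPS (F t)) := by
  apply MvPowerSeries.ext; intro m
  rw [coeff_conjPS, coeff_cmp, coeff_cmp, map_sum]
  refine Finset.sum_congr rfl fun α _ => ?_
  rw [map_mul, coeff_conjPS]
  congr 1
  rw [← coeff_conjPS]
  congr 1
  show MvPowerSeries.map (σ := σ) (starRingEnd ℂ) (∏ i, F i ^ α i) = _
  rw [map_prod]
  exact Finset.prod_congr rfl fun i _ => by rw [map_pow]; rfl

lemma cmp_X_X {τ σ : Type*} [Fintype τ] [DecidableEq τ] [Fintype σ] [DecidableEq σ] (s : τ) (ρ : τ → σ) :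
    cmp (MvPowerSeries.X s : PS τ) (fun p => (MvPowerSeries.X (ρ p) : PS σ)) =
      MvPowerSeries.X (ρ s) :=
  cmp_X s _ (MvPowerSeries.constantCoeff_X _)

lemma cmp_congr {τ σ : Type*} [Fintype τ] [DecidableEq τ] (f : PS τ) {F G : τ → PS σ}
    (h : ∀ t, F t = G t) : cmp f F = cmp f G :=
  congrArg (fun F => cmp f F) (funext h)

end Infra3
section Main

open MvPowerSeries

lemma constantCoeff_injPS {σ τ : Type*} [Fintype σ] [DecidableEq σ] [DecidableEq τ] (ι : σ → τ) (f : PS σ) :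
    MvPowerSeries.constantCoeff (σ := τ) (R := ℂ) (injPS ι f) = MvPowerSeries.constantCoeff (σ := σ) (R := ℂ) f :=
  constantCoeff_cmp f _

lemma segQ_inl {n d : ℕ} (Q : Fin d → PS (Fin n ⊕ (Fin n ⊕ Fin d))) (k : ℕ) (i : Fin n) :
    segQ Q k (Sum.inl i) = MvPowerSeries.X (⟨k, Nat.lt_succ_self k⟩, i) := by
  cases k <;> rfl

lemma segQ_cc {n d : ℕ} (Q : Fin d → PS (Fin n ⊕ (Fin n ⊕ Fin d)))
    (hQ0 : IsFormalMap Q) (k : ℕ) (c : Fin n ⊕ Fin d) :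
    MvPowerSeries.constantCoeff (R := ℂ) (segQ Q k c) = 0 := by
  cases k with
  | zero =>
    cases c with
    | inl i => exact MvPowerSeries.constantCoeff_X _
    | inr l =>
      simp only [segQ, Sum.elim_inr]
      rw [constantCoeff_cmp]; exact hQ0 l
  | succ k =>
    cases c with
    | inl i => exact MvPowerSeries.constantCoeff_X _
    | inr l =>
      simp only [segQ, Sum.elim_inr]
      rw [constantCoeff_cmp]; exact hQ0 l

/-- inclusion of the first `m+1` blocks of variables -/
def iot (m n : ℕ) : Fin (m + 1) × Fin n → Fin (m + 2) × Fin n :=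
  fun p => (p.1.castSucc, p.2)

theorem aux13 {n d : ℕ} (Q : Fin d → PS (Fin n ⊕ (Fin n ⊕ Fin d)))
    (hQ0 : IsFormalMap Q)
    (hreal : ∀ l, cmp (Q l)
        (Sum.elim
          (fun j => (MvPowerSeries.X (Sum.inl j) : PS (Fin n ⊕ (Fin n ⊕ Fin d))))
          (Sum.elim (fun j => MvPowerSeries.X (Sum.inr (Sum.inl j)))
            fun i => cmp (conjPS (Q i))
              (Sum.elim
                (fun j => (MvPowerSeries.X (Sum.inr (Sum.inl j)) :
                    PS (Fin n ⊕ (Fin n ⊕ Fin d))))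
                (Sum.elim (fun j => MvPowerSeries.X (Sum.inl j))
                  fun i' => MvPowerSeries.X (Sum.inr (Sum.inr i')))))) =
      MvPowerSeries.X (Sum.inr (Sum.inr l)))
    (m : ℕ) (c : Fin n ⊕ Fin d) :
    cmp (segQ Q (m + 2) c)
        (fun p : Fin (m + 3) × Fin n =>
          MvPowerSeries.X
            ((if h : (p.1 : ℕ) < m + 2 then (⟨p.1, h⟩ : Fin (m + 2)) else
              ⟨m, by omega⟩), p.2)) =
      injPS (iot m n) (segQ Q m c) := by
  classical
  set R : Fin (m + 3) × Fin n → Fin (m + 2) × Fin n := fun p =>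
    ((if h : (p.1 : ℕ) < m + 2 then (⟨p.1, h⟩ : Fin (m + 2)) else ⟨m, by omega⟩), p.2)
    with hR
  have hpt : ∀ x y : Fin (m + 2) × Fin n, (x.1 : ℕ) = (y.1 : ℕ) → x.2 = y.2 → x = y :=
    fun x y h1 h2 => Prod.ext (Fin.ext h1) h2
  have hXRa : ∀ p : Fin (m + 3) × Fin n,
      MvPowerSeries.constantCoeff (R := ℂ) ((fun p => (MvPowerSeries.X (R p) :
        PS (Fin (m + 2) × Fin n))) p) = 0 := fun p => MvPowerSeries.constantCoeff_X _
  set A : Fin n → PS (Fin (m + 2) × Fin n) :=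
    fun i => MvPowerSeries.X (⟨m, by omega⟩, i) with hA
  set B : Fin n → PS (Fin (m + 2) × Fin n) :=
    fun i => MvPowerSeries.X (⟨m + 1, by omega⟩, i) with hB
  set W : Fin d → PS (Fin (m + 2) × Fin n) :=
    fun l' => injPS (iot m n) (segQ Q m (Sum.inr l')) with hW
  set Φ : Fin n ⊕ (Fin n ⊕ Fin d) → PS (Fin (m + 2) × Fin n) :=
    Sum.elim A (Sum.elim B W) with hPhi
  set Ψ : Fin n ⊕ (Fin n ⊕ Fin d) → PS (Fin (m + 2) × Fin n) :=
    Sum.elim A (Sum.elim B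
      (fun l' => cmp (conjPS (Q l')) (Sum.elim B (Sum.elim A W)))) with hPsi
  have hAa : ∀ i, MvPowerSeries.constantCoeff (R := ℂ) (A i) = 0 :=
    fun i => MvPowerSeries.constantCoeff_X _
  have hBa : ∀ i, MvPowerSeries.constantCoeff (R := ℂ) (B i) = 0 :=
    fun i => MvPowerSeries.constantCoeff_X _
  have hWa : ∀ l', MvPowerSeries.constantCoeff (R := ℂ) (W l') = 0 := fun l' => by
    rw [hW]
    exact (constantCoeff_injPS _ _).trans (segQ_cc Q hQ0 m _)
  have hPhia : ∀ s, MvPowerSeries.constantCoeff (R := ℂ) (Φ s) = 0 := by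
    rintro (i | i | l')
    · exact hAa i
    · exact hBa i
    · exact hWa l'
  -- the key consequence of the reality condition
  set SF : Fin n ⊕ (Fin n ⊕ Fin d) → PS (Fin n ⊕ (Fin n ⊕ Fin d)) :=
    Sum.elim
      (fun j => (MvPowerSeries.X (Sum.inr (Sum.inl j)) : PS (Fin n ⊕ (Fin n ⊕ Fin d))))
      (Sum.elim (fun j => MvPowerSeries.X (Sum.inl j))
        fun i' => MvPowerSeries.X (Sum.inr (Sum.inr i'))) with hSF
  set RF : Fin n ⊕ (Fin n ⊕ Fin d) → PS (Fin n ⊕ (Fin n ⊕ Fin d)) :=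
    Sum.elim
      (fun j => (MvPowerSeries.X (Sum.inl j) : PS (Fin n ⊕ (Fin n ⊕ Fin d))))
      (Sum.elim (fun j => MvPowerSeries.X (Sum.inr (Sum.inl j)))
        fun i => cmp (conjPS (Q i)) SF) with hRF
  have hSFa : ∀ t, MvPowerSeries.constantCoeff (R := ℂ) (SF t) = 0 := by
    rintro (u | u | u)
    · exact MvPowerSeries.constantCoeff_X _
    · exact MvPowerSeries.constantCoeff_X _
    · exact MvPowerSeries.constantCoeff_X _
  have hRFa : ∀ t, MvPowerSeries.constantCoeff (R := ℂ) (RF t) = 0 := by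
    rintro (u | u | u)
    · exact MvPowerSeries.constantCoeff_X _
    · exact MvPowerSeries.constantCoeff_X _
    · show MvPowerSeries.constantCoeff (R := ℂ) (cmp (conjPS (Q u)) SF) = 0
      rw [constantCoeff_cmp]
      exact constantCoeff_conjPS _ (hQ0 u)
  have hkey : ∀ l, cmp (Q l) Ψ = W l := by
    intro l
    have h0 : cmp (cmp (Q l) RF) Φ = cmp (MvPowerSeries.X (Sum.inr (Sum.inr l))) Φ :=
      congrArg (fun f => cmp f Φ) (hreal l)
    rw [cmp_X _ _ (hPhia _)] at h0
    rw [cmp_assoc _ _ _ hRFa hPhia] at h0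
    have hcomp : (fun s => cmp (RF s) Φ) = Ψ := by
      funext s
      rcases s with i | i | l'
      · show cmp ((MvPowerSeries.X (Sum.inl i) : PS (Fin n ⊕ (Fin n ⊕ Fin d)))) Φ =
          Ψ (Sum.inl i)
        rw [cmp_X _ Φ (hPhia _)]
        rfl
      · show cmp ((MvPowerSeries.X (Sum.inr (Sum.inl i)) :
            PS (Fin n ⊕ (Fin n ⊕ Fin d)))) Φ = Ψ (Sum.inr (Sum.inl i))
        rw [cmp_X _ Φ (hPhia _)]
        rfl
      · show cmp (cmp (conjPS (Q l')) SF) Φ = Ψ (Sum.inr (Sum.inr l'))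
        rw [cmp_assoc _ _ _ hSFa hPhia]
        show _ = cmp (conjPS (Q l')) (Sum.elim B (Sum.elim A W))
        refine cmp_congr _ ?_
        rintro (u | u | u)
        · show cmp ((MvPowerSeries.X (Sum.inr (Sum.inl u)) :
              PS (Fin n ⊕ (Fin n ⊕ Fin d)))) Φ = B u
          rw [cmp_X _ Φ (hPhia _)]
          rfl
        · show cmp ((MvPowerSeries.X (Sum.inl u) : PS (Fin n ⊕ (Fin n ⊕ Fin d)))) Φ = A u
          rw [cmp_X _ Φ (hPhia _)]
          rfl
        · show cmp ((MvPowerSeries.X (Sum.inr (Sum.inr u)) :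
              PS (Fin n ⊕ (Fin n ⊕ Fin d)))) Φ = W u
          rw [cmp_X _ Φ (hPhia _)]
          rfl
    rw [hcomp] at h0
    have hphil : Φ (Sum.inr (Sum.inr l)) = W l := rfl
    rw [hphil] at h0
    exact h0
  -- retraction: substituting X ∘ R after the inclusion of the first m+2 blocks
  have hretr : ∀ g : PS (Fin (m + 2) × Fin n),
      cmp (injPS (fun p : Fin (m + 2) × Fin n => (p.1.castSucc, p.2)) g)
        (fun p => (MvPowerSeries.X (R p) : PS (Fin (m + 2) × Fin n))) = g := by
    intro g
    show cmp (cmp g _) _ = g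
    rw [cmp_assoc _ _ _ (fun u => MvPowerSeries.constantCoeff_X _) hXRa]
    have hfam : (fun u : Fin (m + 2) × Fin n =>
        cmp (MvPowerSeries.X ((fun p : Fin (m + 2) × Fin n => (p.1.castSucc, p.2)) u))
          (fun p => (MvPowerSeries.X (R p) : PS (Fin (m + 2) × Fin n)))) =
        (fun u => MvPowerSeries.X u) := by
      funext u
      rw [cmp_X_X]
      refine congrArg MvPowerSeries.X (hpt _ _ ?_ rfl)
      simp [hR, u.1.isLt]
    rw [hfam, cmp_id]
  have hconjcomm : ∀ h : PS (Fin (m + 3) × Fin n),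
      cmp (conjPS h) (fun p => (MvPowerSeries.X (R p) : PS (Fin (m + 2) × Fin n))) =
        conjPS (cmp h (fun p => (MvPowerSeries.X (R p) : PS (Fin (m + 2) × Fin n)))) := by
    intro h
    rw [conjPS_cmp]
    exact cmp_congr _ fun t => (conjPS_X _).symm
  -- now the two cases
  rcases c with i | l
  · -- z-components
    rw [segQ_inl, segQ_inl]
    show cmp (MvPowerSeries.X (⟨m + 2, _⟩, i)) (fun p => MvPowerSeries.X (R p)) = _
    rw [cmp_X_X]
    show MvPowerSeries.X (R (⟨m + 2, Nat.lt_succ_self _⟩, i)) =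
      cmp (MvPowerSeries.X (⟨m, Nat.lt_succ_self m⟩, i)) (fun u => MvPowerSeries.X (iot m n u))
    rw [cmp_X_X]
    refine congrArg MvPowerSeries.X (hpt _ _ ?_ rfl)
    simp [hR, iot]
  · -- w-components
    show cmp (cmp (Q l)
        (Sum.elim
          (fun i => (MvPowerSeries.X (Fin.last (m + 2), i) : PS (Fin (m + 3) × Fin n)))
          (fun zc => conjPS
            (injPS (fun p : Fin (m + 2) × Fin n => (p.1.castSucc, p.2))
              (segQ Q (m + 1) zc)))))
        (fun p => MvPowerSeries.X (R p)) = W l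
    have hG2a : ∀ t, MvPowerSeries.constantCoeff (R := ℂ)
        ((Sum.elim
          (fun i => (MvPowerSeries.X (Fin.last (m + 2), i) : PS (Fin (m + 3) × Fin n)))
          (fun zc => conjPS
            (injPS (fun p : Fin (m + 2) × Fin n => (p.1.castSucc, p.2))
              (segQ Q (m + 1) zc)))) t) = 0 := by
      rintro (u | zc)
      · exact MvPowerSeries.constantCoeff_X _
      · simp only [Sum.elim_inr]
        exact constantCoeff_conjPS _ ((constantCoeff_injPS _ _).trans
          (segQ_cc Q hQ0 (m + 1) zc))
    rw [cmp_assoc _ _ _ hG2a hXRa]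
    rw [← hkey l]
    refine cmp_congr _ ?_
    rintro (u | zc)
    · -- first block
      simp only [Sum.elim_inl, hPsi]
      rw [cmp_X_X]
      show MvPowerSeries.X (R (Fin.last (m + 2), u)) = A u
      rw [hA, hR]
      simp only
      rw [dif_neg (by simp [Fin.last])]
    · -- conjugated previous Segre map
      simp only [Sum.elim_inr]
      rw [hconjcomm, hretr]
      rcases zc with i | l'
      · rw [segQ_inl]
        exact (conjPS_X _).trans rfl
      · show conjPS (segQ Q (m + 1) (Sum.inr l')) = Ψ (Sum.inr (Sum.inr l'))
        have hunf : segQ Q (m + 1) (Sum.inr l') = cmp (Q l')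
            (Sum.elim
              (fun i => (MvPowerSeries.X (Fin.last (m + 1), i) : PS (Fin (m + 2) × Fin n)))
              (fun zc => conjPS
                (injPS (fun p : Fin (m + 1) × Fin n => (p.1.castSucc, p.2))
                  (segQ Q m zc)))) := by
          cases m <;> rfl
        rw [hunf, conjPS_cmp]
        simp only [hPsi, Sum.elim_inr]
        refine cmp_congr _ ?_
        rintro (i | i | l'')
        · simp only [Sum.elim_inl]
          rw [conjPS_X]
          rfl
        · simp only [Sum.elim_inr, Sum.elim_inl]
          rw [conjPS_conjPS, segQ_inl]
          show injPS (fun p : Fin (m + 1) × Fin n => (p.1.castSucc, p.2))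
            (MvPowerSeries.X (⟨m, Nat.lt_succ_self m⟩, i)) = A i
          show cmp (MvPowerSeries.X (⟨m, Nat.lt_succ_self m⟩, i))
            (fun u => MvPowerSeries.X
              ((fun p : Fin (m + 1) × Fin n => (p.1.castSucc, p.2)) u)) = A i
          rw [cmp_X_X, hA]
          exact congrArg MvPowerSeries.X (hpt _ _ rfl rfl)
        · simp only [Sum.elim_inr]
          rw [conjPS_conjPS]
          rfl

end Main
/-- For `j ≥ 2`, `v^{j+1}(t¹,…,t^{j-1},t^j,t^{j+1})|_{t^{j+1}=t^{j-1}}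
= v^{j-1}(t¹,…,t^{j-1})`.  Here `v^{j+1} = segQ Q j` and `v^{j-1} = segQ Q (j-2)`. -/
theorem statement_13 {n d : ℕ} (Q : Fin d → PS (Fin n ⊕ (Fin n ⊕ Fin d)))
    (hQ0 : IsFormalMap Q)
    (hreal : ∀ l, cmp (Q l)
        (Sum.elim
          (fun j => (MvPowerSeries.X (Sum.inl j) : PS (Fin n ⊕ (Fin n ⊕ Fin d))))
          (Sum.elim (fun j => MvPowerSeries.X (Sum.inr (Sum.inl j)))
            fun i => cmp (conjPS (Q i))
              (Sum.elim
                (fun j => (MvPowerSeries.X (Sum.inr (Sum.inl j)) :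
                    PS (Fin n ⊕ (Fin n ⊕ Fin d))))
                (Sum.elim (fun j => MvPowerSeries.X (Sum.inl j))
                  fun i' => MvPowerSeries.X (Sum.inr (Sum.inr i')))))) =
      MvPowerSeries.X (Sum.inr (Sum.inr l)))
    (j : ℕ) (hj : 2 ≤ j) :
    ∀ c : Fin n ⊕ Fin d,
      cmp (segQ Q j c)
        (fun p : Fin (j + 1) × Fin n =>
          MvPowerSeries.X
            ((if h : (p.1 : ℕ) < j then (⟨p.1, h⟩ : Fin j) else ⟨j - 2, by omega⟩), p.2)) =
      injPS
        (fun p : Fin (j - 2 + 1) × Fin n =>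
          ((⟨p.1, by have := p.1.isLt; omega⟩ : Fin j), p.2))
        (segQ Q (j - 2) c) := by
  obtain ⟨m, rfl⟩ : ∃ m, j = m + 2 := ⟨j - 2, by omega⟩
  exact fun c => aux13 Q hQ0 hreal m c

end Segre
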